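/- A semigroup S is (3)-sofic if and only if there exist a sofic group G and an injective multiplicative homomorphism S → G. -/

import Mathlib

/-- Normalized Hamming distance between two self-maps of a (finite) type. -/
noncomputable def dHam {X : Type} (f g : X → X) : ℝ :=
  (({x : X | f x ≠ g x}).ncard : ℝ) / (Nat.card X)

/-- A `(K, ε)`-action of a semigroup `S` on a type `X` (intended finite and nonempty).
Since a semigroup need not have an identity, there is no identity condition. -/
def IsKEActionSemigroup {S : Type*} [Semigroup S] (K : Finset S) (ε : ℝ) {X : Type}
    (ψ : S → X → X) : Prop :=
  (∀ s ∈ K, ∀ t ∈ K, s * t ∈ K → dHam (ψ (s * t)) (ψ s ∘ ψ t) ≤ ε) ∧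
  (∀ s ∈ K, ∀ t ∈ K, s ≠ t → 1 - ε ≤ dHam (ψ s) (ψ t))

/-- A `(K, ε)`-action of a monoid (in particular, of a group) `M` on a type `X`,
including the condition that the identity acts approximately as `id`. -/
def IsKEAction {M : Type*} [Monoid M] (K : Finset M) (ε : ℝ) {X : Type}
    (ψ : M → X → X) : Prop :=
  (∀ s ∈ K, ∀ t ∈ K, s * t ∈ K → dHam (ψ (s * t)) (ψ s ∘ ψ t) ≤ ε) ∧
  ((1 : M) ∈ K → dHam (ψ 1) id ≤ ε) ∧
  (∀ s ∈ K, ∀ t ∈ K, s ≠ t → 1 - ε ≤ dHam (ψ s) (ψ t))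

/-- A group is sofic if for every finite `K ⊆ G` and every `ε > 0` it admits a
`(K, ε)`-action on some nonempty finite set. -/
def IsSoficGroup (G : Type*) [Group G] : Prop :=
  ∀ (K : Finset G) (ε : ℝ), 0 < ε →
    ∃ (X : Type), Finite X ∧ Nonempty X ∧ ∃ ψ : G → X → X, IsKEAction K ε ψ

/-- A semigroup is (3)-sofic if for every finite `K ⊆ S` and every `ε > 0` it admits a
`(K, ε)`-action on some nonempty finite set `X` such that the uniform probability
measure on `X` is approximately invariant: for every `s ∈ K` and every `E ⊆ X`,
`| |E| - |ψ(s)⁻¹(E)| | ≤ ε * |X|`. -/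
def IsSofic3Semigroup (S : Type*) [Semigroup S] : Prop :=
  ∀ (K : Finset S) (ε : ℝ), 0 < ε →
    ∃ (X : Type), Finite X ∧ Nonempty X ∧ ∃ ψ : S → X → X, IsKEActionSemigroup K ε ψ ∧
      ∀ s ∈ K, ∀ E : Set X,
        |(E.ncard : ℝ) - ((ψ s ⁻¹' E).ncard : ℝ)| ≤ ε * (Nat.card X : ℝ)


set_option linter.unusedSectionVars false
set_option linter.unusedVariables false
open scoped Classical

namespace DH

section HamLemmas

variable {X : Type} [Finite X] [Nonempty X]

lemma cardX_pos : (0:ℝ) < (Nat.card X : ℝ) := by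
  exact_mod_cast Nat.card_pos

lemma dHam_le_iff {f g : X → X} {ε : ℝ} :
    dHam f g ≤ ε ↔ (({x : X | f x ≠ g x}).ncard : ℝ) ≤ ε * Nat.card X := by
  rw [dHam, div_le_iff₀ cardX_pos]

lemma le_dHam_iff {f g : X → X} {ε : ℝ} :
    ε ≤ dHam f g ↔ ε * Nat.card X ≤ (({x : X | f x ≠ g x}).ncard : ℝ) := by
  rw [dHam, le_div_iff₀ cardX_pos]

omit [Finite X] [Nonempty X] in
lemma dHam_nonneg {f g : X → X} : 0 ≤ dHam f g := by
  apply div_nonneg (by positivity) (by positivity)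

lemma dHam_le_one {f g : X → X} : dHam f g ≤ 1 := by
  rw [dHam_le_iff, one_mul]
  exact_mod_cast (Set.ncard_le_ncard (Set.subset_univ _) Set.finite_univ).trans
    (le_of_eq (Set.ncard_univ X))

omit [Finite X] [Nonempty X] in
lemma dHam_self (f : X → X) : dHam f f = 0 := by
  simp [dHam]

omit [Finite X] [Nonempty X] in
lemma dHam_comm (f g : X → X) : dHam f g = dHam g f := by
  unfold dHam
  have : {x : X | f x ≠ g x} = {x : X | g x ≠ f x} := by
    ext x; exact ⟨fun h => (Ne.symm h), fun h => (Ne.symm h)⟩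
  rw [this]

lemma dHam_mono {f g f' g' : X → X}
    (h : {x : X | f x ≠ g x} ⊆ {x : X | f' x ≠ g' x}) : dHam f g ≤ dHam f' g' := by
  have h2 : (({x : X | f x ≠ g x}).ncard : ℝ) ≤ (({x : X | f' x ≠ g' x}).ncard : ℝ) := by
    exact_mod_cast Set.ncard_le_ncard h (Set.toFinite _)
  rw [dHam, dHam]; gcongr

lemma dHam_triangle (f g h : X → X) : dHam f h ≤ dHam f g + dHam g h := by
  rw [dHam, dHam, dHam, ← add_div, div_le_div_iff_of_pos_right cardX_pos]
  have hsub : {x : X | f x ≠ h x} ⊆ {x : X | f x ≠ g x} ∪ {x : X | g x ≠ h x} := by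
    intro x hx
    by_contra hc
    simp only [Set.mem_union, Set.mem_setOf_eq, not_or, not_not] at hc
    exact hx (hc.1.trans hc.2)
  calc (({x : X | f x ≠ h x}).ncard : ℝ)
      ≤ (({x : X | f x ≠ g x} ∪ {x : X | g x ≠ h x}).ncard : ℝ) := by
        exact_mod_cast Set.ncard_le_ncard hsub (Set.toFinite _)
    _ ≤ _ := by exact_mod_cast Set.ncard_union_le _ _

lemma dHam_comp_left (u f g : X → X) : dHam (u ∘ f) (u ∘ g) ≤ dHam f g := by
  apply dHam_mono
  intro x hx
  simp only [Set.mem_setOf_eq, Function.comp_apply] at hx ⊢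
  exact fun hc => hx (by rw [hc])

lemma dHam_comp_right (e : X ≃ X) (f g : X → X) : dHam (f ∘ ⇑e) (g ∘ ⇑e) = dHam f g := by
  unfold dHam
  have : {x : X | (f ∘ ⇑e) x ≠ (g ∘ ⇑e) x} = ⇑e.symm '' {x : X | f x ≠ g x} := by
    ext x
    simp only [Set.mem_setOf_eq, Function.comp_apply, Set.mem_image]
    constructor
    · intro hx; exact ⟨e x, hx, e.symm_apply_apply x⟩
    · rintro ⟨y, hy, rfl⟩; simpa using hy
  rw [this, Set.ncard_image_of_injective _ e.symm.injective]


end HamLemmas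

/-- Every self-map of a finite type is close to a permutation, with error bounded by
the size of the complement of its range. -/
lemma exists_perm_close {X : Type} [Finite X] (f : X → X) :
    ∃ e : X ≃ X, ({x : X | f x ≠ e x}).ncard ≤ ((Set.range f)ᶜ).ncard := by
  classical
  cases nonempty_fintype X
  -- a section of f over its range
  let j : Set.range f → X := fun y => y.2.choose
  have hj : ∀ y : Set.range f, f (j y) = y := fun y => y.2.choose_spec
  have hjinj : Function.Injective j := by
    intro y z h
    apply Subtype.ext
    rw [← hj y, ← hj z, h]
  let e0 : Set.range j ≃ Set.range f := (Equiv.ofInjective j hjinj).symm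
  let π : Equiv.Perm X := Equiv.extendSubtype
    (p := fun x => x ∈ Set.range j) (q := fun x => x ∈ Set.range f) e0
  have hπ : ∀ x (hx : x ∈ Set.range j), π x = f x := by
    rintro x ⟨y, rfl⟩
    rw [Equiv.extendSubtype_apply_of_mem e0 (j y) ⟨y, rfl⟩]
    have : e0 ⟨j y, ⟨y, rfl⟩⟩ = y := by
      apply (Equiv.ofInjective j hjinj).injective
      exact Equiv.apply_symm_apply (Equiv.ofInjective j hjinj) _
    rw [this, hj y]
  refine ⟨π, ?_⟩
  have hsub : {x : X | f x ≠ π x} ⊆ (Set.range j)ᶜ := by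
    intro x hx
    simp only [Set.mem_compl_iff]
    intro hmem
    exact hx ((hπ x hmem).symm)
  have h1 : ({x : X | f x ≠ π x}).ncard ≤ ((Set.range j)ᶜ).ncard :=
    Set.ncard_le_ncard hsub (Set.toFinite _)
  have hcards : (Set.range j).ncard = (Set.range f).ncard := by
    rw [← Nat.card_coe_set_eq, ← Nat.card_coe_set_eq]
    exact Nat.card_congr e0
  have h2 : ((Set.range j)ᶜ).ncard = ((Set.range f)ᶜ).ncard := by
    have a1 := Set.ncard_add_ncard_compl (Set.range j)
    have a2 := Set.ncard_add_ncard_compl (Set.range f)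
    omega
  exact h1.trans_eq h2

/-- Coordinatewise action on `Fin m → X`. -/
def amp {X : Type} (m : ℕ) (f : X → X) : (Fin m → X) → (Fin m → X) := fun v i => f (v i)

lemma amp_comp {X : Type} (m : ℕ) (f g : X → X) :
    amp m f ∘ amp m g = amp m (f ∘ g) := rfl

lemma amp_id {X : Type} (m : ℕ) : amp m (id : X → X) = id := rfl

lemma dHam_amp {X : Type} [Finite X] [Nonempty X] (m : ℕ) (f g : X → X) :
    dHam (amp m f) (amp m g) = 1 - (1 - dHam f g) ^ m := by
  classical
  have hN : (0:ℝ) < (Nat.card X : ℝ) := by exact_mod_cast Nat.card_pos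
  set N : ℕ := Nat.card X with hNdef
  set a : ℕ := ({x : X | f x = g x}).ncard with hadef
  have haN : a ≤ N := by
    rw [hadef, hNdef, ← Set.ncard_univ X]
    exact Set.ncard_le_ncard (Set.subset_univ _) Set.finite_univ
  -- the disagreement set is the complement of the agreement set
  have hcompl : {x : X | f x ≠ g x} = {x : X | f x = g x}ᶜ := rfl
  have hd : ({x : X | f x ≠ g x}).ncard = N - a := by
    have := Set.ncard_add_ncard_compl {x : X | f x = g x}
    rw [hcompl]; omega
  have hdham : dHam f g = ((N : ℝ) - a) / N := by
    rw [dHam, hd]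
    push_cast [haN]
    ring_nf
    rw [← hNdef]
  have h1d : 1 - dHam f g = (a : ℝ) / N := by
    rw [hdham]; field_simp
    ring
  -- counting on the power
  have hcardP : Nat.card (Fin m → X) = N ^ m := by
    rw [Nat.card_fun, Nat.card_eq_fintype_card (α := Fin m), Fintype.card_fin]
  have hagree : ({v : Fin m → X | ∀ i, f (v i) = g (v i)}).ncard = a ^ m := by
    rw [← Nat.card_coe_set_eq]
    have e : {v : Fin m → X | ∀ i, f (v i) = g (v i)} ≃ (Fin m → {x : X // f x = g x}) :=
      Equiv.subtypePiEquivPi (p := fun _ x => f x = g x)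
    rw [Nat.card_congr e, Nat.card_fun, Nat.card_eq_fintype_card (α := Fin m), Fintype.card_fin,
      hadef, ← Nat.card_coe_set_eq]
    rfl
  have hset : {v : Fin m → X | amp m f v ≠ amp m g v}
      = {v : Fin m → X | ∀ i, f (v i) = g (v i)}ᶜ := by
    ext v
    simp only [Set.mem_setOf_eq, Set.mem_compl_iff, amp, not_forall]
    constructor
    · intro h
      by_contra hc
      push_neg at hc
      exact h (funext fun i => hc i)
    · rintro ⟨i, hi⟩ h
      exact hi (congrFun h i)
  have hdisagree : ({v : Fin m → X | amp m f v ≠ amp m g v}).ncard = N ^ m - a ^ m := by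
    have h2 := Set.ncard_add_ncard_compl {v : Fin m → X | ∀ i, f (v i) = g (v i)}
    rw [hcardP] at h2
    rw [hset]
    rw [hagree] at h2
    exact Nat.eq_sub_of_add_eq' h2
  have hNm : (0:ℝ) < ((N:ℝ) ^ m) := by positivity
  rw [dHam, hdisagree, hcardP, h1d, div_pow]
  have hpow : (a:ℝ) ^ m ≤ (N:ℝ) ^ m := by
    apply pow_le_pow_left₀ (by positivity)
    exact_mod_cast haN
  push_cast [Nat.pow_le_pow_left haN m]
  field_simp

lemma dHam_amp_le {X : Type} [Finite X] [Nonempty X] (m : ℕ) (f g : X → X) :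
    dHam (amp m f) (amp m g) ≤ m * dHam f g := by
  rw [dHam_amp]
  have hd0 : 0 ≤ dHam f g := div_nonneg (by positivity) (by positivity)
  have hd1 : dHam f g ≤ 1 := by
    rw [dHam, div_le_one (by exact_mod_cast Nat.card_pos), ← Set.ncard_univ X]
    exact_mod_cast Set.ncard_le_ncard (Set.subset_univ _) Set.finite_univ
  have hb := one_add_mul_le_pow (a := -dHam f g) (by linarith) m
  have h2 : (1 : ℝ) + -dHam f g = 1 - dHam f g := by ring
  rw [h2] at hb
  have h3 : (1:ℝ) + (m:ℝ) * -dHam f g = 1 - (m:ℝ) * dHam f g := by ring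
  rw [h3] at hb
  linarith

lemma dHam_amp_ge {X : Type} [Finite X] [Nonempty X] {m : ℕ} {f g : X → X} {δ : ℝ}
    (hδ : δ ≤ dHam f g) (hδ1 : δ ≤ 1) :
    1 - (1 - δ) ^ m ≤ dHam (amp m f) (amp m g) := by
  rw [dHam_amp]
  have hd1 : dHam f g ≤ 1 := by
    rw [dHam, div_le_one (by exact_mod_cast Nat.card_pos), ← Set.ncard_univ X]
    exact_mod_cast Set.ncard_le_ncard (Set.subset_univ _) Set.finite_univ
  have : (1 - dHam f g) ^ m ≤ (1 - δ) ^ m := by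
    apply pow_le_pow_left₀ (by linarith) (by linarith)
  linarith


lemma preimage_card_le {X : Type} [Finite X] (u v : X → X) (E : Set X) :
    (u ⁻¹' E).ncard ≤ E.ncard + ({x : X | v (u x) = x}ᶜ).ncard := by
  set A := {x : X | v (u x) = x} with hA
  have hinj : Set.InjOn u A := by
    intro x hx y hy hxy
    have hx' : v (u x) = x := hx
    have hy' : v (u y) = y := hy
    rw [← hx', ← hy', hxy]
  have hsub : u ⁻¹' E ⊆ (u ⁻¹' E ∩ A) ∪ Aᶜ := by
    intro x hx
    by_cases hxA : x ∈ A
    · exact Or.inl ⟨hx, hxA⟩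
    · exact Or.inr hxA
  calc (u ⁻¹' E).ncard ≤ ((u ⁻¹' E ∩ A) ∪ Aᶜ).ncard :=
        Set.ncard_le_ncard hsub (Set.toFinite _)
    _ ≤ (u ⁻¹' E ∩ A).ncard + (Aᶜ).ncard := Set.ncard_union_le _ _
    _ ≤ E.ncard + (Aᶜ).ncard := by
        have h1 : (u ⁻¹' E ∩ A).ncard = (u '' (u ⁻¹' E ∩ A)).ncard :=
          (Set.ncard_image_of_injOn (hinj.mono Set.inter_subset_right)).symm
        have h2 : u '' (u ⁻¹' E ∩ A) ⊆ E := by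
          rintro y ⟨x, ⟨hxE, _⟩, rfl⟩
          exact hxE
        exact Nat.add_le_add_right (h1.trans_le (Set.ncard_le_ncard h2 (Set.toFinite _))) _

lemma le_preimage_card {X : Type} [Finite X] (u v : X → X) (E : Set X) :
    E.ncard ≤ (u ⁻¹' E).ncard + ({x : X | u (v x) = x}ᶜ).ncard := by
  set B := {x : X | u (v x) = x} with hB
  have hinj : Set.InjOn v B := by
    intro x hx y hy hxy
    have hx' : u (v x) = x := hx
    have hy' : u (v y) = y := hy
    rw [← hx', ← hy', hxy]
  have hsub : E ⊆ (E ∩ B) ∪ Bᶜ := by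
    intro x hx
    by_cases hxB : x ∈ B
    · exact Or.inl ⟨hx, hxB⟩
    · exact Or.inr hxB
  calc E.ncard ≤ ((E ∩ B) ∪ Bᶜ).ncard := Set.ncard_le_ncard hsub (Set.toFinite _)
    _ ≤ (E ∩ B).ncard + (Bᶜ).ncard := Set.ncard_union_le _ _
    _ ≤ (u ⁻¹' E).ncard + (Bᶜ).ncard := by
        have h1 : (E ∩ B).ncard = (v '' (E ∩ B)).ncard :=
          (Set.ncard_image_of_injOn (hinj.mono Set.inter_subset_right)).symm
        have h2 : v '' (E ∩ B) ⊆ u ⁻¹' E := by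
          rintro y ⟨x, ⟨hxE, hxB⟩, rfl⟩
          have : u (v x) = x := hxB
          simp only [Set.mem_preimage, this]
          exact hxE
        exact Nat.add_le_add_right (h1.trans_le (Set.ncard_le_ncard h2 (Set.toFinite _))) _


lemma dHam_close_id [Finite X] [Nonempty X] {f g : X → X} {δ : ℝ}
    (h1 : dHam g f ≤ δ) (h2 : dHam g id ≤ δ) : dHam f id ≤ 2 * δ := by
  have := dHam_triangle f g id
  rw [dHam_comm f g] at this
  linarith

theorem backward {S : Type u} [Semigroup S] (G : Type u) [Group G] (f : S → G)
    (hinj : Function.Injective f) (hmul : ∀ a b : S, f (a * b) = f a * f b)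
    (hG : IsSoficGroup G) : IsSofic3Semigroup S := by
  classical
  intro K ε hε
  set δ : ℝ := ε / 4 with hδdef
  have hδ : 0 < δ := by positivity
  have hδε : δ ≤ ε := by linarith
  let K' : Finset G := {1} ∪ K.image f ∪ (K.image f).image (·⁻¹)
      ∪ ((K ×ˢ K).image fun p => f p.1 * f p.2)
  have mem1 : (1 : G) ∈ K' := by simp [K']
  have memf : ∀ s ∈ K, f s ∈ K' := by
    intro s hs
    simp only [K', Finset.mem_union, Finset.mem_image]
    exact Or.inl (Or.inl (Or.inr ⟨s, hs, rfl⟩))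
  have meminv : ∀ s ∈ K, (f s)⁻¹ ∈ K' := by
    intro s hs
    simp only [K', Finset.mem_union, Finset.mem_image]
    exact Or.inl (Or.inr ⟨f s, ⟨s, hs, rfl⟩, rfl⟩)
  have memprod : ∀ s ∈ K, ∀ t ∈ K, f s * f t ∈ K' := by
    intro s hs t ht
    simp only [K', Finset.mem_union, Finset.mem_image]
    exact Or.inr ⟨(s, t), Finset.mem_product.2 ⟨hs, ht⟩, rfl⟩
  obtain ⟨X, hXfin, hXne, ψ', hψ'⟩ := hG K' δ hδ
  obtain ⟨hmulc, hid, hsep⟩ := hψ'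
  refine ⟨X, hXfin, hXne, fun s => ψ' (f s), ⟨?_, ?_⟩, ?_⟩
  · -- products
    intro s hs t ht hst
    show dHam (ψ' (f (s * t))) (ψ' (f s) ∘ ψ' (f t)) ≤ ε
    rw [hmul s t]
    have := hmulc (f s) (memf s hs) (f t) (memf t ht) (memprod s hs t ht)
    exact this.trans hδε
  · -- separation
    intro s hs t ht hne
    have := hsep (f s) (memf s hs) (f t) (memf t ht) (fun h => hne (hinj h))
    linarith
  · -- invariance
    intro s hs E
    show |(E.ncard : ℝ) - ((ψ' (f s) ⁻¹' E).ncard : ℝ)| ≤ ε * (Nat.card X : ℝ)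
    have hvu : dHam (ψ' ((f s)⁻¹) ∘ ψ' (f s)) id ≤ 2 * δ := by
      apply dHam_close_id (g := ψ' 1) ?_ (hid mem1)
      have h1 := hmulc ((f s)⁻¹) (meminv s hs) (f s) (memf s hs)
        (by rw [inv_mul_cancel]; exact mem1)
      rwa [inv_mul_cancel] at h1
    have huv : dHam (ψ' (f s) ∘ ψ' ((f s)⁻¹)) id ≤ 2 * δ := by
      apply dHam_close_id (g := ψ' 1) ?_ (hid mem1)
      have h1 := hmulc (f s) (memf s hs) ((f s)⁻¹) (meminv s hs)
        (by rw [mul_inv_cancel]; exact mem1)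
      rwa [mul_inv_cancel] at h1
    have hA : (({x : X | ψ' ((f s)⁻¹) (ψ' (f s) x) = x}ᶜ).ncard : ℝ) ≤ 2 * δ * Nat.card X := by
      have h := dHam_le_iff.1 hvu
      have hseteq : {x : X | (ψ' ((f s)⁻¹) ∘ ψ' (f s)) x ≠ id x}
          = {x : X | ψ' ((f s)⁻¹) (ψ' (f s) x) = x}ᶜ := by
        ext x; simp [Function.comp]
      rwa [hseteq] at h
    have hB : (({x : X | ψ' (f s) (ψ' ((f s)⁻¹) x) = x}ᶜ).ncard : ℝ) ≤ 2 * δ * Nat.card X := by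
      have h := dHam_le_iff.1 huv
      have hseteq : {x : X | (ψ' (f s) ∘ ψ' ((f s)⁻¹)) x ≠ id x}
          = {x : X | ψ' (f s) (ψ' ((f s)⁻¹) x) = x}ᶜ := by
        ext x; simp [Function.comp]
      rwa [hseteq] at h
    have h1 : ((ψ' (f s) ⁻¹' E).ncard : ℝ) ≤ (E.ncard : ℝ) + 2 * δ * Nat.card X := by
      have h := preimage_card_le (ψ' (f s)) (ψ' ((f s)⁻¹)) E
      have hc : ((ψ' (f s) ⁻¹' E).ncard : ℝ)
          ≤ (E.ncard : ℝ) + (({x : X | ψ' ((f s)⁻¹) (ψ' (f s) x) = x}ᶜ).ncard : ℝ) := by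
        exact_mod_cast h
      linarith
    have h2 : (E.ncard : ℝ) ≤ ((ψ' (f s) ⁻¹' E).ncard : ℝ) + 2 * δ * Nat.card X := by
      have h := le_preimage_card (ψ' (f s)) (ψ' ((f s)⁻¹)) E
      have hc : (E.ncard : ℝ) ≤ ((ψ' (f s) ⁻¹' E).ncard : ℝ)
          + (({x : X | ψ' (f s) (ψ' ((f s)⁻¹) x) = x}ᶜ).ncard : ℝ) := by
        exact_mod_cast h
      linarith
    rw [abs_le]
    have hcard : (0:ℝ) ≤ (Nat.card X : ℝ) := by positivity
    constructor <;> nlinarith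


variable {S : Type u} [Semigroup S]

/-- index type for the ultraproduct -/
abbrev Idx (S : Type u) := Finset S × ℕ

def Fset (a : Idx S) : Set (Idx S) := {b | a.1 ⊆ b.1 ∧ a.2 ≤ b.2}

lemma Fset_mem_self (a : Idx S) : a ∈ Fset a := ⟨Finset.Subset.refl _, le_refl _⟩

noncomputable def baseFilter (S : Type u) [Semigroup S] : Filter (Idx S) :=
  ⨅ a : Idx S, Filter.principal (Fset a)

lemma baseFilter_neBot : (baseFilter S).NeBot := by
  classical
  apply Filter.iInf_neBot_of_directed
  · intro a b
    refine ⟨(a.1 ∪ b.1, max a.2 b.2), ?_, ?_⟩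
    · show Filter.principal (Fset (a.1 ∪ b.1, max a.2 b.2)) ≤ Filter.principal (Fset a)
      rw [Filter.principal_mono]
      rintro x ⟨h1, h2⟩
      exact ⟨Finset.subset_union_left.trans h1, le_trans (le_max_left _ _) h2⟩
    · show Filter.principal (Fset (a.1 ∪ b.1, max a.2 b.2)) ≤ Filter.principal (Fset b)
      rw [Filter.principal_mono]
      rintro x ⟨h1, h2⟩
      exact ⟨Finset.subset_union_right.trans h1, le_trans (le_max_right _ _) h2⟩
  · intro a
    exact Filter.principal_neBot_iff.2 ⟨a, Fset_mem_self a⟩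

noncomputable def UF (S : Type u) [Semigroup S] : Ultrafilter (Idx S) :=
  haveI := baseFilter_neBot (S := S)
  Ultrafilter.of (baseFilter S)

lemma Fset_mem_UF (a : Idx S) : Fset a ∈ UF S := by
  haveI := baseFilter_neBot (S := S)
  have h1 : Fset a ∈ baseFilter S :=
    Filter.mem_iInf_of_mem a (Filter.mem_principal_self _)
  exact (Ultrafilter.of_le (baseFilter S)) h1


/-- accuracy at index `i` -/
noncomputable def eps (i : Idx S) : ℝ := 1 / (i.2 + 1)

lemma eps_pos (i : Idx S) : 0 < eps (S := S) i := by
  unfold eps; positivity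

lemma eps_le {i : Idx S} {n : ℕ} (hn : n ≤ i.2) : eps (S := S) i ≤ 1 / (n + 1) := by
  unfold eps
  apply one_div_le_one_div_of_le (by positivity)
  have : (n:ℝ) ≤ i.2 := by exact_mod_cast hn
  linarith

section Data

variable (h : IsSofic3Semigroup S)

noncomputable def Xi (i : Idx S) : Type := (h i.1 (eps i) (eps_pos i)).choose

lemma Xi_finite (i : Idx S) : Finite (Xi h i) := (h i.1 (eps i) (eps_pos i)).choose_spec.1

lemma Xi_nonempty (i : Idx S) : Nonempty (Xi h i) :=
  (h i.1 (eps i) (eps_pos i)).choose_spec.2.1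

noncomputable def psi (i : Idx S) : S → Xi h i → Xi h i :=
  (h i.1 (eps i) (eps_pos i)).choose_spec.2.2.choose

lemma psi_spec (i : Idx S) :
    IsKEActionSemigroup i.1 (eps i) (psi h i) ∧
      ∀ s ∈ i.1, ∀ E : Set (Xi h i),
        |(E.ncard : ℝ) - (((psi h i s) ⁻¹' E).ncard : ℝ)| ≤ eps i * (Nat.card (Xi h i) : ℝ) :=
  (h i.1 (eps i) (eps_pos i)).choose_spec.2.2.choose_spec

/-- permutations approximating the maps `psi` -/
noncomputable def pim (i : Idx S) (s : S) : Equiv.Perm (Xi h i) :=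
  haveI := Xi_finite h i
  if s ∈ i.1 then (exists_perm_close (psi h i s)).choose else 1

lemma pim_eq {i : Idx S} {s : S} (hs : s ∈ i.1) :
    pim h i s = haveI := Xi_finite h i; (exists_perm_close (psi h i s)).choose := by
  unfold pim
  rw [if_pos hs]

lemma dist_psi_pim {i : Idx S} {s : S} (hs : s ∈ i.1) :
    dHam (psi h i s) ⇑(pim h i s) ≤ eps (S := S) i := by
  haveI := Xi_finite h i
  haveI := Xi_nonempty h i
  rw [pim_eq h hs]
  have h1 := (exists_perm_close (psi h i s)).choose_spec
  -- bound the complement of the range using invariance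
  have h2 := (psi_spec h i).2 s hs ((Set.range (psi h i s))ᶜ)
  have hpre : (psi h i s) ⁻¹' ((Set.range (psi h i s))ᶜ) = ∅ := by
    ext x
    simp [Set.mem_preimage, Set.mem_range]
  rw [hpre] at h2
  simp only [Set.ncard_empty, Nat.cast_zero, sub_zero] at h2
  rw [abs_of_nonneg (by positivity)] at h2
  rw [dHam_le_iff]
  calc (({x | psi h i s x ≠ (exists_perm_close (psi h i s)).choose x}).ncard : ℝ)
      ≤ (((Set.range (psi h i s))ᶜ).ncard : ℝ) := by exact_mod_cast h1
    _ ≤ eps (S := S) i * (Nat.card (Xi h i) : ℝ) := h2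

lemma est_mul {i : Idx S} {s t : S} (hs : s ∈ i.1) (ht : t ∈ i.1) (hst : s * t ∈ i.1) :
    dHam ⇑(pim h i (s * t)) (⇑(pim h i s) ∘ ⇑(pim h i t)) ≤ 4 * eps (S := S) i := by
  haveI := Xi_finite h i
  haveI := Xi_nonempty h i
  have e1 : dHam ⇑(pim h i (s * t)) (psi h i (s * t)) ≤ eps (S := S) i := by
    rw [dHam_comm]; exact dist_psi_pim h hst
  have e2 : dHam (psi h i (s * t)) (psi h i s ∘ psi h i t) ≤ eps (S := S) i :=
    (psi_spec h i).1.1 s hs t ht hst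
  have e3 : dHam (psi h i s ∘ psi h i t) (psi h i s ∘ ⇑(pim h i t)) ≤ eps (S := S) i :=
    (dHam_comp_left _ _ _).trans (dist_psi_pim h ht)
  have e4 : dHam (psi h i s ∘ ⇑(pim h i t)) (⇑(pim h i s) ∘ ⇑(pim h i t)) ≤ eps (S := S) i := by
    rw [dHam_comp_right (pim h i t) (psi h i s) ⇑(pim h i s)]
    exact dist_psi_pim h hs
  have t1 := dHam_triangle ⇑(pim h i (s * t)) (psi h i (s * t)) (⇑(pim h i s) ∘ ⇑(pim h i t))
  have t2 := dHam_triangle (psi h i (s * t)) (psi h i s ∘ psi h i t) (⇑(pim h i s) ∘ ⇑(pim h i t))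
  have t3 := dHam_triangle (psi h i s ∘ psi h i t) (psi h i s ∘ ⇑(pim h i t))
    (⇑(pim h i s) ∘ ⇑(pim h i t))
  linarith

lemma est_sep {i : Idx S} {s t : S} (hs : s ∈ i.1) (ht : t ∈ i.1) (hne : s ≠ t) :
    1 - 3 * eps (S := S) i ≤ dHam ⇑(pim h i s) ⇑(pim h i t) := by
  haveI := Xi_finite h i
  haveI := Xi_nonempty h i
  have e0 : 1 - eps (S := S) i ≤ dHam (psi h i s) (psi h i t) :=
    (psi_spec h i).1.2 s hs t ht hne
  have e1 : dHam (psi h i s) ⇑(pim h i s) ≤ eps (S := S) i := dist_psi_pim h hs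
  have e2 : dHam ⇑(pim h i t) (psi h i t) ≤ eps (S := S) i := by
    rw [dHam_comm]; exact dist_psi_pim h ht
  have t1 := dHam_triangle (psi h i s) ⇑(pim h i s) (psi h i t)
  have t2 := dHam_triangle ⇑(pim h i s) ⇑(pim h i t) (psi h i t)
  linarith

/-- the product of permutation groups -/
def PP : Type u := ∀ i : Idx S, Equiv.Perm (Xi h i)

noncomputable instance : Group (PP h) := by unfold PP; infer_instance

lemma PP_mul_apply (g k : PP h) (i : Idx S) :
    ⇑((g * k) i) = ⇑(g i) ∘ ⇑(k i) := by
  show ⇑((g i) * (k i)) = _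
  ext x
  rfl

lemma PP_one_apply (i : Idx S) : ⇑((1 : PP h) i) = id := rfl

/-- the metric-ultraproduct congruence -/
def conRel (g k : PP h) : Prop :=
  ∀ δ : ℝ, 0 < δ → {i : Idx S | dHam ⇑(g i) ⇑(k i) ≤ δ} ∈ UF S

lemma dHam_comp_comp {X : Type} [Finite X] [Nonempty X] (a b c : X → X) (e : X ≃ X) :
    dHam (a ∘ c) (b ∘ ⇑e) ≤ dHam a b + dHam c ⇑e := by
  have t1 := dHam_triangle (a ∘ c) (a ∘ ⇑e) (b ∘ ⇑e)
  have h1 : dHam (a ∘ c) (a ∘ ⇑e) ≤ dHam c ⇑e := dHam_comp_left a c ⇑e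
  have h2 : dHam (a ∘ ⇑e) (b ∘ ⇑e) = dHam a b := dHam_comp_right e a b
  linarith

noncomputable def conS : Con (PP h) where
  r := conRel h
  iseqv := by
    constructor
    · intro g δ hδ
      have : {i : Idx S | dHam ⇑(g i) ⇑(g i) ≤ δ} = Set.univ := by
        ext i
        simp only [Set.mem_setOf_eq, Set.mem_univ, iff_true]
        rw [dHam_self]
        exact le_of_lt hδ
      rw [this]
      exact Filter.univ_mem
    · intro g k hr δ hδ
      have : {i : Idx S | dHam ⇑(g i) ⇑(k i) ≤ δ} = {i : Idx S | dHam ⇑(k i) ⇑(g i) ≤ δ} := by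
        ext i
        simp only [Set.mem_setOf_eq]
        rw [dHam_comm]
      rw [← this]
      exact hr δ hδ
    · intro g k l h1 h2 δ hδ
      have hh := Filter.inter_mem (h1 (δ/2) (by linarith)) (h2 (δ/2) (by linarith))
      refine Filter.mem_of_superset hh ?_
      rintro i ⟨hi1, hi2⟩
      simp only [Set.mem_setOf_eq] at hi1 hi2 ⊢
      haveI := Xi_finite h i
      haveI := Xi_nonempty h i
      have := dHam_triangle ⇑(g i) ⇑(k i) ⇑(l i)
      linarith
  mul' := by
    intro w x y z h1 h2 δ hδ
    have hh := Filter.inter_mem (h1 (δ/2) (by linarith)) (h2 (δ/2) (by linarith))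
    refine Filter.mem_of_superset hh ?_
    rintro i ⟨hi1, hi2⟩
    simp only [Set.mem_setOf_eq] at hi1 hi2 ⊢
    haveI := Xi_finite h i
    haveI := Xi_nonempty h i
    rw [PP_mul_apply, PP_mul_apply]
    have := dHam_comp_comp ⇑(w i) ⇑(x i) ⇑(y i) (z i)
    linarith

/-- the metric ultraproduct group -/
noncomputable def GG : Type u := (conS h).Quotient

noncomputable instance : Group (GG h) := by unfold GG; infer_instance

/-- the embedding of `S` -/
noncomputable def phi (s : S) : GG h := Con.toQuotient (M := PP h) (c := conS h) (id (α := PP h) fun i => pim h i s)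

lemma phi_mul (s t : S) : phi h (s * t) = phi h s * phi h t := by
  refine (Con.eq (conS h) (a := (fun i => pim h i (s * t) : PP h))
    (b := (fun i => pim h i s : PP h) * (fun i => pim h i t : PP h))).2 ?_
  intro δ hδ
  obtain ⟨n, hn⟩ := exists_nat_gt (4 / δ)
  refine Filter.mem_of_superset (Fset_mem_UF ({s, t, s * t}, n)) ?_
  rintro i ⟨hK, hn'⟩
  simp only [Set.mem_setOf_eq]
  have hs : s ∈ i.1 := hK (by simp)
  have ht : t ∈ i.1 := hK (by simp)
  have hst : s * t ∈ i.1 := hK (by simp)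
  haveI := Xi_finite h i
  haveI := Xi_nonempty h i
  show dHam ⇑(pim h i (s * t)) (⇑(pim h i s) ∘ ⇑(pim h i t)) ≤ δ
  refine (est_mul h hs ht hst).trans ?_
  have he : eps (S := S) i ≤ 1 / ((n:ℝ) + 1) := eps_le hn'
  have hn2 : (0:ℝ) < (n:ℝ) + 1 := by positivity
  rw [div_lt_iff₀ hδ] at hn
  have h6 : 4 < δ * ((n:ℝ) + 1) := by nlinarith
  calc 4 * eps (S := S) i ≤ 4 * (1 / ((n:ℝ) + 1)) := by linarith
    _ ≤ δ := by
      rw [mul_one_div, div_le_iff₀ hn2]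
      nlinarith

lemma phi_inj : Function.Injective (phi h) := by
  intro s t hst
  by_contra hne
  replace hst := (Con.eq (conS h) (a := (fun i => pim h i s : PP h))
    (b := (fun i => pim h i t : PP h))).1 hst
  have h1 := hst (1/4) (by norm_num)
  have h2 := Fset_mem_UF (S := S) ({s, t}, 8)
  have h3 := Filter.inter_mem h1 h2
  obtain ⟨i, hi1, hi2⟩ := (UF S).nonempty_of_mem h3
  simp only [Set.mem_setOf_eq] at hi1
  obtain ⟨hK, hn⟩ := hi2
  have hs : s ∈ i.1 := hK (by simp)
  have ht : t ∈ i.1 := hK (by simp)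
  haveI := Xi_finite h i
  haveI := Xi_nonempty h i
  have h4 := est_sep h hs ht hne
  have h5 : eps (S := S) i ≤ 1 / (8 + 1) := eps_le hn
  norm_num at h5
  linarith

lemma GG_sofic : IsSoficGroup (GG h) := by
  classical
  intro Kg ε hε
  set rep : GG h → PP h := fun g => Quotient.out g with hrepdef
  have hrep : ∀ g : GG h, ((rep g : PP h) : (conS h).Quotient) = g := fun g =>
    Quotient.out_eq g
  have hrel : ∀ g k : GG h, conRel h (rep g * rep k) (rep (g * k)) := by
    intro g k
    have heq : ((rep g * rep k : PP h) : (conS h).Quotient)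
        = ((rep (g * k) : PP h) : (conS h).Quotient) := by
      rw [Con.coe_mul, hrep, hrep, hrep]
      rfl
    exact ((conS h).eq).1 heq
  have hrel1 : conRel h (rep 1) 1 := by
    have heq : ((rep (1 : GG h) : PP h) : (conS h).Quotient) = ((1 : PP h) : (conS h).Quotient) := by
      rw [hrep, Con.coe_one]
      rfl
    exact ((conS h).eq).1 heq
  have hsepd : ∀ g k : GG h, g ≠ k →
      ∃ δ : ℝ, 0 < δ ∧ δ ≤ 1/2 ∧
        {i : Idx S | δ < dHam ⇑(rep g i) ⇑(rep k i)} ∈ UF S := by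
    intro g k hgk
    have hnc : ¬ conRel h (rep g) (rep k) := by
      intro hc
      exact hgk (by rw [← hrep g, ← hrep k]; exact ((conS h).eq).2 hc)
    rw [conRel] at hnc
    push_neg at hnc
    obtain ⟨δ, hδ, hmem⟩ := hnc
    refine ⟨min δ (1/2), by positivity, min_le_right _ _, ?_⟩
    have hcompl : {i : Idx S | dHam ⇑(rep g i) ⇑(rep k i) ≤ δ}ᶜ ∈ UF S :=
      (Ultrafilter.compl_mem_iff_notMem).2 hmem
    apply Filter.mem_of_superset hcompl
    intro i hi
    simp only [Set.mem_compl_iff, Set.mem_setOf_eq, not_le] at hi ⊢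
    exact lt_of_le_of_lt (min_le_left _ _) hi
  set dlt : GG h → GG h → ℝ := fun g k =>
    if hgk : g ≠ k then (hsepd g k hgk).choose else 1/2 with hdltdef
  have hdlt : ∀ g k : GG h, g ≠ k → 0 < dlt g k ∧ dlt g k ≤ 1/2 ∧
      {i : Idx S | dlt g k < dHam ⇑(rep g i) ⇑(rep k i)} ∈ UF S := by
    intro g k hgk
    have : dlt g k = (hsepd g k hgk).choose := by rw [hdltdef]; exact dif_pos hgk
    rw [this]
    exact (hsepd g k hgk).choose_spec
  have hdlt2 : ∀ g k : GG h, dlt g k ≤ 1/2 ∧ 0 < dlt g k := by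
    intro g k
    by_cases hgk : g ≠ k
    · exact ⟨(hdlt g k hgk).2.1, (hdlt g k hgk).1⟩
    · have : dlt g k = 1/2 := by rw [hdltdef]; exact dif_neg hgk
      rw [this]; norm_num
  -- the minimal separation
  set Ps : Finset ℝ := insert (1/2) ((Kg ×ˢ Kg).image fun p => dlt p.1 p.2) with hPs
  have hPsne : Ps.Nonempty := ⟨1/2, Finset.mem_insert_self _ _⟩
  set δ₀ : ℝ := Ps.min' hPsne with hδ₀
  have hδ₀pos : 0 < δ₀ := by
    rw [hδ₀, Finset.lt_min'_iff]
    intro b hb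
    rw [hPs, Finset.mem_insert] at hb
    rcases hb with hb | hb
    · rw [hb]; norm_num
    · obtain ⟨p, _, rfl⟩ := Finset.mem_image.1 hb
      exact (hdlt2 p.1 p.2).2
  have hδ₀half : δ₀ ≤ 1/2 := Finset.min'_le _ _ (Finset.mem_insert_self _ _)
  have hδ₀le : ∀ g ∈ Kg, ∀ k ∈ Kg, δ₀ ≤ dlt g k := by
    intro g hg k hk
    apply Finset.min'_le
    rw [hPs, Finset.mem_insert]
    exact Or.inr (Finset.mem_image.2 ⟨(g, k), Finset.mem_product.2 ⟨hg, hk⟩, rfl⟩)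
  obtain ⟨m, hm⟩ := exists_pow_lt_of_lt_one hε (by linarith : 1 - δ₀ < 1)
  set ε' : ℝ := ε / (m + 1) with hε'
  have hε'pos : 0 < ε' := by positivity
  have hmε' : (m : ℝ) * ε' ≤ ε := by
    have hm1 : (0:ℝ) < (m:ℝ) + 1 := by positivity
    calc (m : ℝ) * ε' = ε * ((m:ℝ) / ((m:ℝ) + 1)) := by rw [hε']; ring
      _ ≤ ε * 1 := by
          apply mul_le_mul_of_nonneg_left ?_ (le_of_lt hε)
          rw [div_le_one hm1]
          linarith
      _ = ε := mul_one ε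
  -- the good U-sets
  set W : GG h × GG h → Set (Idx S) := fun p =>
    {i : Idx S | (p.1 ∈ Kg ∧ p.2 ∈ Kg ∧ p.1 * p.2 ∈ Kg) →
      dHam ⇑(rep (p.1 * p.2) i) (⇑(rep p.1 i) ∘ ⇑(rep p.2 i)) ≤ ε'} with hWdef
  have hW : ∀ p, W p ∈ UF S := by
    intro p
    apply Filter.mem_of_superset (((conS h).symm (hrel p.1 p.2)) ε' hε'pos)
    intro i hi
    simp only [Set.mem_setOf_eq] at hi ⊢
    intro _
    rwa [PP_mul_apply] at hi
  set W' : GG h × GG h → Set (Idx S) := fun p =>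
    {i : Idx S | p.1 ≠ p.2 → dlt p.1 p.2 < dHam ⇑(rep p.1 i) ⇑(rep p.2 i)} with hW'def
  have hW' : ∀ p, W' p ∈ UF S := by
    intro p
    by_cases hp : p.1 ≠ p.2
    · apply Filter.mem_of_superset (hdlt p.1 p.2 hp).2.2
      intro i hi
      simp only [Set.mem_setOf_eq] at hi ⊢
      exact fun _ => hi
    · have : W' p = Set.univ := by
        ext i
        simp only [hW'def, Set.mem_setOf_eq, Set.mem_univ, iff_true]
        exact fun hc => absurd hc hp
      rw [this]
      exact Filter.univ_mem
  have hB : {i : Idx S | dHam ⇑(rep 1 i) id ≤ ε'} ∈ UF S := by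
    apply Filter.mem_of_superset (hrel1 ε' hε'pos)
    intro i hi
    simp only [Set.mem_setOf_eq] at hi ⊢
    rwa [PP_one_apply h i] at hi
  have hT : ({i : Idx S | dHam ⇑(rep 1 i) id ≤ ε'}
      ∩ ⋂ p ∈ (↑(Kg ×ˢ Kg) : Set (GG h × GG h)), (W p ∩ W' p)) ∈ UF S := by
    apply Filter.inter_mem hB
    exact (Filter.biInter_mem (Kg ×ˢ Kg).finite_toSet).2
      fun p _ => Filter.inter_mem (hW p) (hW' p)
  obtain ⟨i₀, hi₀B, hi₀rest⟩ := (UF S).nonempty_of_mem hT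
  have hi₀ : ∀ g ∈ Kg, ∀ k ∈ Kg, i₀ ∈ W (g, k) ∩ W' (g, k) := by
    intro g hg k hk
    have hmem : ((g, k) : GG h × GG h) ∈ (↑(Kg ×ˢ Kg) : Set (GG h × GG h)) := by
      simp only [Finset.coe_product, Set.mem_prod]
      exact ⟨hg, hk⟩
    exact Set.mem_iInter₂.1 hi₀rest (g, k) hmem
  haveI := Xi_finite h i₀
  haveI := Xi_nonempty h i₀
  refine ⟨Fin m → Xi h i₀, inferInstance, inferInstance,
    fun g => amp m ⇑(rep g i₀), ?_, ?_, ?_⟩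
  · intro g hg k hk hgk
    obtain ⟨hWi, _⟩ := hi₀ g hg k hk
    simp only [hWdef, Set.mem_setOf_eq] at hWi
    have hd := hWi ⟨hg, hk, hgk⟩
    show dHam (amp m ⇑(rep (g * k) i₀)) (amp m ⇑(rep g i₀) ∘ amp m ⇑(rep k i₀)) ≤ ε
    rw [amp_comp]
    refine (dHam_amp_le m _ _).trans ?_
    calc (m:ℝ) * dHam ⇑(rep (g * k) i₀) (⇑(rep g i₀) ∘ ⇑(rep k i₀)) ≤ (m:ℝ) * ε' :=
          mul_le_mul_of_nonneg_left hd (by positivity)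
      _ ≤ ε := hmε'
  · intro h1
    show dHam (amp m ⇑(rep 1 i₀)) id ≤ ε
    rw [← amp_id m]
    refine (dHam_amp_le m _ _).trans ?_
    simp only [Set.mem_setOf_eq] at hi₀B
    calc (m:ℝ) * dHam ⇑(rep 1 i₀) id ≤ (m:ℝ) * ε' :=
          mul_le_mul_of_nonneg_left hi₀B (by positivity)
      _ ≤ ε := hmε'
  · intro g hg k hk hgk
    obtain ⟨_, hW'i⟩ := hi₀ g hg k hk
    simp only [hW'def, Set.mem_setOf_eq] at hW'i
    have hd := hW'i hgk
    show 1 - ε ≤ dHam (amp m ⇑(rep g i₀)) (amp m ⇑(rep k i₀))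
    have hdlt2' := (hdlt2 g k).1
    have hamp := dHam_amp_ge (m := m) (le_of_lt hd) (hdlt2'.trans (by norm_num))
    have hpow : (1 - dlt g k) ^ m ≤ (1 - δ₀) ^ m := by
      apply pow_le_pow_left₀ (by linarith) (by linarith [hδ₀le g hg k hk])
    linarith

end Data

theorem forward (h : IsSofic3Semigroup S) : ∃ (G : Type u) (_ : Group G) (f : S → G),
    Function.Injective f ∧ (∀ a b : S, f (a * b) = f a * f b) ∧ IsSoficGroup G :=
  ⟨GG h, inferInstance, phi h, phi_inj h, phi_mul h, GG_sofic h⟩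


end DH

/-- A semigroup `S` is (3)-sofic if and only if there exist a sofic group `G` and an
injective multiplicative homomorphism `S → G`. -/
theorem sofic3Semigroup_iff_embeds_into_sofic_group {S : Type u} [Semigroup S] :
    IsSofic3Semigroup S ↔
      ∃ (G : Type u) (_ : Group G) (f : S → G),
        Function.Injective f ∧ (∀ a b : S, f (a * b) = f a * f b) ∧ IsSoficGroup G := by
  constructor
  · exact DH.forward
  · rintro ⟨G, _, f, hinj, hmul, hG⟩
    exact DH.backward G f hinj hmul hG
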